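/- Define the Gandhi polynomials by P̃_1(z) = 1 and P̃_{r+1}(z) = (z+1)^2·P̃_r(z+1) − z^2·P̃_r(z), and define P_r by P_0 = 1, P_{r+1}(n) = n^2·(P_r(n) − P_r(n−1)) + n·P_r(n−1). Then for all r ≥ 1, P_r(n) = (−1)^{r−1}·n·P̃_r(−n) as polynomials. -/
import Mathlib


open Polynomial

noncomputable def Ppoly : ℕ → Polynomial ℤ
  | 0 => 1
  | r + 1 =>
      X ^ 2 * (Ppoly r - (Ppoly r).comp (X - 1)) + X * (Ppoly r).comp (X - 1)

/-- `gandhi r` is the Gandhi polynomial `P̃_{r+1}`, so `gandhi 0 = P̃_1 = 1`. -/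
noncomputable def gandhi : ℕ → Polynomial ℤ
  | 0 => 1
  | r + 1 => (X + 1) ^ 2 * (gandhi r).comp (X + 1) - X ^ 2 * gandhi r

lemma stmt_17_aux (k : ℕ) :
    Ppoly (k + 1) = ((-1 : ℤ) ^ k) • (X * (gandhi k).comp (-X)) := by
  induction k with
  | zero => simp [Ppoly, gandhi]
  | succ k ih =>
    have e1 : ((-X : Polynomial ℤ)).comp (X - 1) = -X + 1 := by
      simp [sub_comp]; ring
    have e2 : ((X + 1 : Polynomial ℤ)).comp (-X) = -X + 1 := by simp
    rw [show k + 1 + 1 = (k + 1) + 1 from rfl, Ppoly, ih, gandhi]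
    simp only [smul_eq_C_mul, mul_comp, sub_comp, add_comp, pow_comp, X_comp,
      one_comp, C_comp, neg_comp, comp_assoc, e1, e2, C_neg, C_1, C_pow]
    ring

theorem stmt_17 (r : ℕ) (hr : 1 ≤ r) :
    Ppoly r = ((-1 : ℤ) ^ (r - 1)) • (X * (gandhi (r - 1)).comp (-X)) := by
  obtain ⟨k, rfl⟩ := Nat.exists_eq_add_of_le hr
  simpa [Nat.add_comm] using stmt_17_aux k
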